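/- arXiv:2207.00853 — 4 statements merged into one kernel-verified Lean document; each statement's English description precedes it below -/
import Mathlib

section
/- For every real a with 0 ≤ a ≤ 1 and every z ∈ ℝ one has Ψ*(a·z) ≤ a²·Ψ*(z), i.e. e^{az} + e^{−az} − 2 ≤ a²·(e^{z} + e^{−z} − 2). -/
private lemma sinh_mul_le (a : ℝ) (ha0 : 0 ≤ a) (ha1 : a ≤ 1) :
    ∀ x : ℝ, 0 ≤ x → Real.sinh (a * x) ≤ a * Real.sinh x := by
  intro x hx
  set f : ℝ → ℝ := fun t => a * Real.sinh t - Real.sinh (a * t) with hf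
  have hderiv : ∀ t : ℝ, HasDerivAt f (a * Real.cosh t - Real.cosh (a * t) * a) t := by
    intro t
    have h1 : HasDerivAt (fun t : ℝ => Real.sinh (a * t)) (Real.cosh (a * t) * a) t := by
      simpa [Function.comp_def] using (Real.hasDerivAt_sinh (a * t)).comp t ((hasDerivAt_id t).const_mul a)
    exact ((Real.hasDerivAt_sinh t).const_mul a).sub h1
  have hmono : MonotoneOn f (Set.Ici (0 : ℝ)) := by
    apply monotoneOn_of_deriv_nonneg (convex_Ici 0)
    · exact Continuous.continuousOn (by continuity)
    · exact fun t _ => ((hderiv t).differentiableAt).differentiableWithinAt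
    · intro t ht
      rw [(hderiv t).deriv]
      have h0t : (0 : ℝ) ≤ t := le_of_lt (by simpa using ht)
      have : Real.cosh (a * t) ≤ Real.cosh t := by
        rw [Real.cosh_le_cosh, abs_of_nonneg (mul_nonneg ha0 h0t), abs_of_nonneg h0t]
        nlinarith
      nlinarith
  have h0 : f 0 ≤ f x := hmono (by simp) hx hx
  simp only [hf, mul_zero, Real.sinh_zero] at h0
  linarith

private lemma cosh_mul_le (a : ℝ) (ha0 : 0 ≤ a) (ha1 : a ≤ 1) :
    ∀ z : ℝ, 0 ≤ z → Real.cosh (a * z) - 1 ≤ a ^ 2 * (Real.cosh z - 1) := by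
  intro z hz
  set g : ℝ → ℝ := fun t => a ^ 2 * (Real.cosh t - 1) - (Real.cosh (a * t) - 1) with hg
  have hderiv : ∀ t : ℝ, HasDerivAt g (a ^ 2 * Real.sinh t - Real.sinh (a * t) * a) t := by
    intro t
    have h1 : HasDerivAt (fun t : ℝ => Real.cosh (a * t) - 1) (Real.sinh (a * t) * a) t := by
      have : HasDerivAt (fun t : ℝ => Real.cosh (a * t)) (Real.sinh (a * t) * a) t := by
        simpa [Function.comp_def] using (Real.hasDerivAt_cosh (a * t)).comp t ((hasDerivAt_id t).const_mul a)
      exact this.sub_const 1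
    exact (((Real.hasDerivAt_cosh t).sub_const 1).const_mul (a ^ 2)).sub h1
  have hmono : MonotoneOn g (Set.Ici (0 : ℝ)) := by
    apply monotoneOn_of_deriv_nonneg (convex_Ici 0)
    · exact Continuous.continuousOn (by continuity)
    · exact fun t _ => ((hderiv t).differentiableAt).differentiableWithinAt
    · intro t ht
      rw [(hderiv t).deriv]
      have h0t : (0 : ℝ) ≤ t := le_of_lt (by simpa using ht)
      have := sinh_mul_le a ha0 ha1 t h0t
      nlinarith
  have h0 : g 0 ≤ g z := hmono (by simp) hz hz
  simp only [hg, mul_zero, Real.cosh_zero] at h0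
  linarith

/-- The dual function `Ψ*(z) = e^z + e^{-z} - 2`. -/
noncomputable def PsiStar (z : ℝ) : ℝ := Real.exp z + Real.exp (-z) - 2

private lemma psiStar_eq (z : ℝ) : PsiStar z = 2 * (Real.cosh z - 1) := by
  simp [PsiStar, Real.cosh_eq]; ring

/-- For every `0 ≤ a ≤ 1` and every `z ∈ ℝ`, `Ψ*(a·z) ≤ a² · Ψ*(z)`. -/
theorem psiStar_scaling (a z : ℝ) (ha0 : 0 ≤ a) (ha1 : a ≤ 1) :
    PsiStar (a * z) ≤ a ^ 2 * PsiStar z := by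
  rw [psiStar_eq, psiStar_eq]
  rcases le_total 0 z with hz | hz
  · have := cosh_mul_le a ha0 ha1 z hz
    linarith
  · have := cosh_mul_le a ha0 ha1 (-z) (by linarith)
    rw [show a * -z = -(a * z) by ring, Real.cosh_neg, Real.cosh_neg] at this
    linarith
end

section
/- Let τ > 0, let u₀ ∈ L¹(γ) be nonnegative, and let u : [0,τ] → L¹(γ) be continuous with u(0) = u₀, u(t) ≥ 0 γ-a.e., and u(t) = u₀ + ∫₀ᵗ c_{u(s)}·(1 − u(s)) ds in L¹(γ) for all t ∈ [0,τ]. Then for every t ∈ [0,τ] one has ∫_T u(t) dγ ≤ e^{‖c‖_∞ · γ(T) · t} · ∫_T u₀ dγ. -/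
open MeasureTheory intervalIntegral
open scoped ENNReal Classical

/-- `c_v(x) = ∫ c(x,y) v(y) γ(dy)`. -/
noncomputable def cDens {T : Type*} [MeasurableSpace T] (γ : Measure T) (c : T → T → ℝ)
    (v : T → ℝ) (x : T) : ℝ :=
  ∫ y, c x y * v y ∂γ

/-- The mean-field vector field in density form: `v ↦ c_v·(1 − v)`. -/
noncomputable def mfField {T : Type*} [MeasurableSpace T] (γ : Measure T) (c : T → T → ℝ)
    (v : T → ℝ) : T → ℝ :=
  fun x => cDens γ c v x * (1 - v x)

/-- The mean-field vector field as a (partially defined, defaulting to `0`) map on `L¹(γ)`. -/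
noncomputable def mfFieldLp {T : Type*} [MeasurableSpace T] (γ : Measure T) (c : T → T → ℝ)
    (v : Lp ℝ 1 γ) : Lp ℝ 1 γ :=
  if h : MemLp (mfField γ c v) 1 γ then MemLp.toLp _ h else 0

/-- `u : [0,τ] → L¹(γ)` is a strong solution of the mean-field equation
`∂_t u = c_u·(1 − u)` with initial datum `u₀`: it is continuous on `[0,τ]`,
nonnegative, and satisfies the integral (Bochner) formulation of the equation. -/
def IsMFSolution {T : Type*} [MeasurableSpace T] (γ : Measure T) (c : T → T → ℝ)
    (τ : ℝ) (u₀ : Lp ℝ 1 γ) (u : ℝ → Lp ℝ 1 γ) : Prop :=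
  ContinuousOn u (Set.Icc 0 τ) ∧ u 0 = u₀ ∧
    (∀ t ∈ Set.Icc (0 : ℝ) τ, 0 ≤ᵐ[γ] (u t : T → ℝ)) ∧
    ∀ t ∈ Set.Icc (0 : ℝ) τ,
      IntervalIntegrable (fun s => mfFieldLp γ c (u s)) MeasureTheory.volume 0 t ∧
        u t = u₀ + ∫ s in (0 : ℝ)..t, mfFieldLp γ c (u s)

/-- Exponential mass growth along mean-field solutions:
`∫ u(t) dγ ≤ e^{‖c‖_∞·γ(T)·t} · ∫ u₀ dγ` for `t ∈ [0,τ]`. -/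
theorem mf_mass_growth {T : Type*} [TopologicalSpace T] [CompactSpace T] [PolishSpace T]
    [MeasurableSpace T] [BorelSpace T]
    (γ : Measure T) [IsFiniteMeasure γ]
    (c : T → T → ℝ) (hc_meas : Measurable fun p : T × T => c p.1 p.2)
    (hc_nonneg : ∀ x y, 0 ≤ c x y)
    (hc_bdd : BddAbove (Set.range fun p : T × T => c p.1 p.2))
    (hc_diag : ∀ x, c x x = 0)
    (τ : ℝ) (hτ : 0 < τ)
    (u₀ : Lp ℝ 1 γ) (hu₀ : 0 ≤ᵐ[γ] (u₀ : T → ℝ))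
    (u : ℝ → Lp ℝ 1 γ) (hu : IsMFSolution γ c τ u₀ u) :
    ∀ t ∈ Set.Icc (0 : ℝ) τ,
      ∫ x, u t x ∂γ ≤
        Real.exp ((⨆ p : T × T, c p.1 p.2) * (γ Set.univ).toReal * t) * ∫ x, u₀ x ∂γ := by
  classical
  obtain ⟨hu_cont, hu_zero, hu_nonneg, hu_eq⟩ := hu
  set K : ℝ := ⨆ p : T × T, c p.1 p.2 with hK
  have hKle : ∀ x y, c x y ≤ K := fun x y => le_ciSup hc_bdd (x, y)
  have hK0 : 0 ≤ K := Real.iSup_nonneg fun p => hc_nonneg p.1 p.2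
  set gT : ℝ := (γ Set.univ).toReal with hgT
  have hgT0 : 0 ≤ gT := ENNReal.toReal_nonneg
  set K' : ℝ := K * gT with hK'
  have hK'0 : 0 ≤ K' := mul_nonneg hK0 hgT0
  set L : Lp ℝ 1 γ →L[ℝ] ℝ := MeasureTheory.L1.integralCLM with hLdef
  have hLval : ∀ v : Lp ℝ 1 γ, L v = ∫ x, v x ∂γ := by
    intro v
    have h1 := MeasureTheory.L1.integral_eq_integral v
    rwa [MeasureTheory.L1.integral_eq] at h1
  set M : ℝ → ℝ := fun s => ∫ x, u s x ∂γ with hM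
  have hML : ∀ s, M s = L (u s) := fun s => (hLval (u s)).symm
  have hMnn : ∀ s ∈ Set.Icc (0 : ℝ) τ, 0 ≤ M s := fun s hs =>
    MeasureTheory.integral_nonneg_of_ae (hu_nonneg s hs)
  set φ : ℝ → ℝ := fun s => L (mfFieldLp γ c (u s)) with hφ
  -- Key bound: φ s ≤ K' * M s on [0, τ]
  have key : ∀ s ∈ Set.Icc (0 : ℝ) τ, φ s ≤ K' * M s := by
    intro s hs
    have hMs0 : 0 ≤ M s := hMnn s hs
    set v : T → ℝ := (u s : T → ℝ) with hv
    have hv0 : 0 ≤ᵐ[γ] v := hu_nonneg s hs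
    have hvInt : Integrable v γ := L1.integrable_coeFn (u s)
    have hvSM : StronglyMeasurable v := Lp.stronglyMeasurable (u s)
    have hφval : φ s = L (mfFieldLp γ c (u s)) := rfl
    rw [hφval]
    unfold mfFieldLp
    split_ifs with h
    · rw [hLval]
      have hInteg : Integrable (mfField γ c v) γ := memLp_one_iff_integrable.mp h
      have hcongr : ∫ x, (MemLp.toLp _ h : Lp ℝ 1 γ) x ∂γ = ∫ x, mfField γ c v x ∂γ :=
        integral_congr_ae (MemLp.coeFn_toLp h)
      rw [hcongr]
      -- pointwise properties of cDens
      have hcv_nonneg : ∀ x, 0 ≤ cDens γ c v x := by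
        intro x
        apply MeasureTheory.integral_nonneg_of_ae
        filter_upwards [hv0] with y hy
        exact mul_nonneg (hc_nonneg x y) hy
      have hcv_le : ∀ x, cDens γ c v x ≤ K * M s := by
        intro x
        have hInt1 : Integrable (fun y => c x y * v y) γ := by
          have hmeasx : AEStronglyMeasurable (fun y => c x y) γ :=
            (hc_meas.comp measurable_prodMk_left).aestronglyMeasurable
          exact hvInt.bdd_mul hmeasx
            (c := K) (Filter.Eventually.of_forall fun y => by rw [Real.norm_eq_abs, abs_of_nonneg (hc_nonneg x y)]; exact hKle x y)
        have hInt2 : Integrable (fun y => K * v y) γ := hvInt.const_mul K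
        have hmono : ∫ y, c x y * v y ∂γ ≤ ∫ y, K * v y ∂γ := by
          apply integral_mono_ae hInt1 hInt2
          filter_upwards [hv0] with y hy
          exact mul_le_mul_of_nonneg_right (hKle x y) hy
        calc cDens γ c v x = ∫ y, c x y * v y ∂γ := rfl
          _ ≤ ∫ y, K * v y ∂γ := hmono
          _ = K * ∫ y, v y ∂γ := MeasureTheory.integral_const_mul K v
          _ = K * M s := rfl
      have hcv_meas : StronglyMeasurable (cDens γ c v) := by
        have hp : StronglyMeasurable fun p : T × T => c p.1 p.2 * v p.2 :=
          (hc_meas.mul (hvSM.measurable.comp measurable_snd)).stronglyMeasurable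
        exact hp.integral_prod_right'
      have hcvInt : Integrable (cDens γ c v) γ := by
        apply Integrable.mono' (integrable_const (K * M s)) hcv_meas.aestronglyMeasurable
        refine Filter.Eventually.of_forall fun x => ?_
        rw [Real.norm_eq_abs, abs_of_nonneg (hcv_nonneg x)]
        exact hcv_le x
      have step1 : ∫ x, mfField γ c v x ∂γ ≤ ∫ x, cDens γ c v x ∂γ := by
        apply integral_mono_ae hInteg hcvInt
        filter_upwards [hv0] with x hx
        calc mfField γ c v x = cDens γ c v x * (1 - v x) := rfl
          _ ≤ cDens γ c v x * 1 := mul_le_mul_of_nonneg_left (by have hx' : (0:ℝ) ≤ v x := hx; linarith) (hcv_nonneg x)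
          _ = cDens γ c v x := mul_one _
      have step2 : ∫ x, cDens γ c v x ∂γ ≤ ∫ _x : T, K * M s ∂γ :=
        integral_mono hcvInt (integrable_const _) hcv_le
      have step3 : ∫ _x : T, K * M s ∂γ = gT * (K * M s) := by
        rw [MeasureTheory.integral_const, smul_eq_mul]
        rfl
      calc ∫ x, mfField γ c v x ∂γ ≤ ∫ _x : T, K * M s ∂γ := le_trans step1 step2
        _ = gT * (K * M s) := step3
        _ = K' * M s := by rw [hK']; ring
    · rw [map_zero]
      exact mul_nonneg hK'0 hMs0
  -- the clamped (globally continuous) mass function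
  set Mc : ℝ → ℝ := fun s => M (min (max s 0) τ) with hMc
  have hclamp : ∀ s : ℝ, min (max s 0) τ ∈ Set.Icc (0 : ℝ) τ :=
    fun s => ⟨le_min (le_max_right s 0) hτ.le, min_le_right _ _⟩
  have hMcont : ContinuousOn M (Set.Icc 0 τ) := by
    have : ContinuousOn (fun s => L (u s)) (Set.Icc 0 τ) :=
      L.continuous.comp_continuousOn hu_cont
    intro x hx
    exact ((this x hx).congr (fun y _ => hML y) (hML x))
  have hMc_cont : Continuous Mc := by
    apply hMcont.comp_continuous
    · exact ((continuous_id.max continuous_const).min continuous_const)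
    · exact hclamp
  have hMceq : ∀ s ∈ Set.Icc (0 : ℝ) τ, Mc s = M s := by
    intro s hs
    simp only [hMc]
    rw [max_eq_left hs.1, min_eq_left hs.2]
  -- the comparison function N
  set N : ℝ → ℝ := fun t => M 0 + K' * ∫ s in (0 : ℝ)..t, Mc s with hN
  have hMeq : ∀ t ∈ Set.Icc (0 : ℝ) τ, M t = M 0 + ∫ s in (0 : ℝ)..t, φ s := by
    intro t ht
    obtain ⟨hF_int, hF_eq⟩ := hu_eq t ht
    have h0 : M 0 = L u₀ := by rw [hML, hu_zero]
    rw [hML, hF_eq, map_add, ← L.intervalIntegral_comp_comm hF_int, h0]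
  have hMN : ∀ t ∈ Set.Icc (0 : ℝ) τ, M t ≤ N t := by
    intro t ht
    obtain ⟨hF_int, _⟩ := hu_eq t ht
    have hφ_int : IntervalIntegrable φ volume 0 t :=
      ⟨L.integrable_comp hF_int.1, L.integrable_comp hF_int.2⟩
    have hKMc_int : IntervalIntegrable (fun s => K' * Mc s) volume 0 t :=
      ((continuous_const.mul hMc_cont)).intervalIntegrable 0 t
    have hint_mono : (∫ s in (0 : ℝ)..t, φ s) ≤ ∫ s in (0 : ℝ)..t, K' * Mc s := by
      apply intervalIntegral.integral_mono_on ht.1 hφ_int hKMc_int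
      intro s hs
      have hs' : s ∈ Set.Icc (0 : ℝ) τ := ⟨hs.1, hs.2.trans ht.2⟩
      rw [hMceq s hs']
      exact key s hs'
    calc M t = M 0 + ∫ s in (0 : ℝ)..t, φ s := hMeq t ht
      _ ≤ M 0 + ∫ s in (0 : ℝ)..t, K' * Mc s := by linarith
      _ = M 0 + K' * ∫ s in (0 : ℝ)..t, Mc s := by
          rw [intervalIntegral.integral_const_mul]
      _ = N t := rfl
  have hM00 : 0 ≤ M 0 := hMnn 0 ⟨le_refl _, hτ.le⟩
  -- N is differentiable with derivative K' * Mc t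
  have hN' : ∀ t : ℝ, HasDerivAt N (K' * Mc t) t := by
    intro t
    have h1 : HasDerivAt (fun r => ∫ s in (0 : ℝ)..r, Mc s) (Mc t) t :=
      (hMc_cont.integral_hasStrictDerivAt 0 t).hasDerivAt
    exact (h1.const_mul K').const_add (M 0)
  have hNcont : Continuous N := by
    have : Differentiable ℝ N := fun t => (hN' t).differentiableAt
    exact this.continuous
  have hN0 : N 0 = M 0 := by
    simp only [hN, intervalIntegral.integral_same, mul_zero, add_zero]
  have hNnorm : ∀ x ∈ Set.Icc (0 : ℝ) τ, ‖N x‖ ≤ gronwallBound (M 0) K' 0 (x - 0) := by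
    apply norm_le_gronwallBound_of_norm_deriv_right_le hNcont.continuousOn
      (fun x _ => (hN' x).hasDerivWithinAt)
    · rw [hN0, Real.norm_eq_abs, abs_of_nonneg hM00]
    · intro x hx
      have hx' : x ∈ Set.Icc (0 : ℝ) τ := ⟨hx.1, hx.2.le⟩
      have h1 : Mc x = M x := hMceq x hx'
      have h2 : 0 ≤ M x := hMnn x hx'
      have h3 : M x ≤ N x := hMN x hx'
      have h4 : 0 ≤ N x := le_trans h2 h3
      rw [h1, Real.norm_eq_abs, Real.norm_eq_abs, abs_of_nonneg (mul_nonneg hK'0 h2),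
        abs_of_nonneg h4, add_zero]
      exact mul_le_mul_of_nonneg_left h3 hK'0
  intro t ht
  have hfinal : M t ≤ M 0 * Real.exp (K' * t) := by
    have h1 : M t ≤ N t := hMN t ht
    have h2 : N t ≤ ‖N t‖ := le_abs_self _
    have h3 := hNnorm t ht
    rw [gronwallBound_ε0, sub_zero] at h3
    linarith
  have hM0eq : M 0 = ∫ x, u₀ x ∂γ := by rw [hM]; simp only []; rw [hu_zero]
  calc ∫ x, u t x ∂γ = M t := rfl
    _ ≤ M 0 * Real.exp (K' * t) := hfinal
    _ = Real.exp (K * gT * t) * ∫ x, u₀ x ∂γ := by rw [hM0eq, hK']; ring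
end

section
/- Let τ > 0 and let u₀ ∈ L¹(γ) satisfy 1/C ≤ u₀(x) ≤ C for γ-a.e. x, for some constant C > 1. Let u : [0,τ] → L¹(γ) be continuous with u(0) = u₀, u(t) ≥ 0 γ-a.e., and u(t) = u₀ + ∫₀ᵗ c_{u(s)}·(1 − u(s)) ds in L¹(γ) for all t ∈ [0,τ]. Then there exists a constant C_τ ≥ 1 such that 1/C_τ ≤ u(t)(x) ≤ C_τ for γ-a.e. x, for every t ∈ [0,τ]. -/
open MeasureTheory intervalIntegral
open scoped ENNReal Classical

/-- Pairing of an `L¹` function with a fixed measurable function bounded by `1`,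
as a continuous linear functional on `L¹`. -/
noncomputable def pairCLM {T : Type*} [MeasurableSpace T] (γ : Measure T)
    (g : T → ℝ) (hg : AEStronglyMeasurable g γ) (hb : ∀ x, ‖g x‖ ≤ 1) :
    Lp ℝ 1 γ →L[ℝ] ℝ :=
  LinearMap.mkContinuous
    { toFun := fun v => ∫ x, g x * v x ∂γ
      map_add' := by
        intro v w
        have h1 : Integrable (fun x => g x * v x) γ :=
          (L1.integrable_coeFn v).bdd_mul hg (Filter.Eventually.of_forall hb)
        have h2 : Integrable (fun x => g x * w x) γ :=
          (L1.integrable_coeFn w).bdd_mul hg (Filter.Eventually.of_forall hb)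
        rw [← integral_add h1 h2]
        refine integral_congr_ae ?_
        filter_upwards [Lp.coeFn_add v w] with x hx
        rw [hx]; simp; ring
      map_smul' := by
        intro a v
        simp only [RingHom.id_apply]
        rw [← MeasureTheory.integral_smul]
        refine integral_congr_ae ?_
        filter_upwards [Lp.coeFn_smul a v] with x hx
        rw [hx]; simp [smul_eq_mul]; ring }
    1 (by
      intro v
      simp only [LinearMap.coe_mk, AddHom.coe_mk, one_mul]
      calc ‖∫ x, g x * v x ∂γ‖ ≤ ∫ x, ‖g x * v x‖ ∂γ := norm_integral_le_integral_norm _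
        _ ≤ ∫ x, ‖v x‖ ∂γ := by
            refine integral_mono_of_nonneg (Filter.Eventually.of_forall fun x => norm_nonneg _)
              (L1.integrable_coeFn v).norm ?_
            filter_upwards with x
            rw [norm_mul]
            exact mul_le_of_le_one_left (norm_nonneg _) (hb x)
        _ = ‖v‖ := (L1.norm_eq_integral_norm v).symm)

theorem pairCLM_apply {T : Type*} [MeasurableSpace T] (γ : Measure T)
    (g : T → ℝ) (hg : AEStronglyMeasurable g γ) (hb : ∀ x, ‖g x‖ ≤ 1) (v : Lp ℝ 1 γ) :
    pairCLM γ g hg hb v = ∫ x, g x * v x ∂γ := rfl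

/-- The pointwise penalty function `ψ(a) = (a-C)⁺ + (C⁻¹-a)⁺` satisfies a one-sided
Lipschitz-type inequality with the sign weight determined by `a`. -/
theorem psi_step {C a b : ℝ} (hC : 1 ≤ C) :
    (max (a - C) 0 + max (C⁻¹ - a) 0) - (max (b - C) 0 + max (C⁻¹ - b) 0) ≤
      (if C < a then (1 : ℝ) else if a < C⁻¹ then -1 else 0) * (a - b) := by
  have hC0 : (0 : ℝ) < C := lt_of_lt_of_le one_pos hC
  have hCinv : C⁻¹ ≤ 1 := inv_le_one_of_one_le₀ hC
  have h1 : b - C ≤ max (b - C) 0 := le_max_left _ _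
  have h2 : C⁻¹ - b ≤ max (C⁻¹ - b) 0 := le_max_left _ _
  have h3 : (0:ℝ) ≤ max (b - C) 0 := le_max_right _ _
  have h4 : (0:ℝ) ≤ max (C⁻¹ - b) 0 := le_max_right _ _
  split_ifs with ha hb'
  · have e1 : max (a - C) 0 = a - C := max_eq_left (by linarith)
    have e2 : max (C⁻¹ - a) 0 = 0 := max_eq_right (by linarith)
    rw [e1, e2]; linarith
  · have e1 : max (a - C) 0 = 0 := max_eq_right (by linarith)
    have e2 : max (C⁻¹ - a) 0 = C⁻¹ - a := max_eq_left (by linarith)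
    rw [e1, e2]; linarith
  · have e1 : max (a - C) 0 = 0 := max_eq_right (by linarith)
    have e2 : max (C⁻¹ - a) 0 = 0 := max_eq_right (by linarith)
    rw [e1, e2]; linarith

set_option maxHeartbeats 2000000 in
/-- Lemma 2.8: if the initial density is bounded above and below, so is the solution,
uniformly on `[0,τ]`. -/
theorem mf_density_bounds {T : Type*} [TopologicalSpace T] [CompactSpace T] [PolishSpace T]
    [MeasurableSpace T] [BorelSpace T]
    (γ : Measure T) [IsFiniteMeasure γ]
    (c : T → T → ℝ) (hc_meas : Measurable fun p : T × T => c p.1 p.2)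
    (hc_nonneg : ∀ x y, 0 ≤ c x y)
    (hc_bdd : BddAbove (Set.range fun p : T × T => c p.1 p.2))
    (hc_diag : ∀ x, c x x = 0)
    (τ : ℝ) (hτ : 0 < τ)
    (u₀ : Lp ℝ 1 γ) (C : ℝ) (hC : 1 < C)
    (hu₀ : ∀ᵐ x ∂γ, 1 / C ≤ u₀ x ∧ u₀ x ≤ C)
    (u : ℝ → Lp ℝ 1 γ) (hu : IsMFSolution γ c τ u₀ u) :
    ∃ Cτ : ℝ, 1 ≤ Cτ ∧
      ∀ t ∈ Set.Icc (0 : ℝ) τ, ∀ᵐ x ∂γ, 1 / Cτ ≤ u t x ∧ u t x ≤ Cτ := by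
  obtain ⟨hu_cont, hu0, hu_nonneg, hu_eq⟩ := hu
  refine ⟨C, hC.le, ?_⟩
  -- basic constants
  have hC0 : (0 : ℝ) < C := lt_trans one_pos hC
  have hCinv : C⁻¹ ≤ 1 := inv_le_one_of_one_le₀ hC.le
  obtain ⟨M, hM⟩ := hc_bdd
  set M' := max M 0 with hM'def
  have hM'0 : (0:ℝ) ≤ M' := le_max_right _ _
  have hcM : ∀ x y, c x y ≤ M' := fun x y => le_max_of_le_left (hM ⟨(x, y), rfl⟩)
  obtain ⟨K, hK⟩ := isCompact_Icc.exists_bound_of_continuousOn hu_cont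
  set K' := max K 1 with hK'def
  have hK'0 : (0:ℝ) ≤ K' := le_trans zero_le_one (le_max_right _ _)
  have hKb : ∀ s ∈ Set.Icc (0:ℝ) τ, ‖u s‖ ≤ K' := fun s hs => (hK s hs).trans (le_max_left _ _)
  set L := M' * K' with hLdef
  have hL0 : (0:ℝ) ≤ L := mul_nonneg hM'0 hK'0
  -- the core estimates for the vector field
  have hMain : ∀ v : Lp ℝ 1 γ, 0 ≤ᵐ[γ] (v : T → ℝ) → ‖v‖ ≤ K' →
      (∀ x, 0 ≤ cDens γ c (v : T → ℝ) x ∧ cDens γ c (v : T → ℝ) x ≤ L) ∧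
        Integrable (mfField γ c (v : T → ℝ)) γ := by
    intro v hv hvK
    have hcx : ∀ x : T, AEStronglyMeasurable (fun y => c x y) γ :=
      fun x => ((hc_meas.comp (measurable_prodMk_left)).aestronglyMeasurable)
    have hI : ∀ x, Integrable (fun y => c x y * v y) γ := by
      intro x
      refine (L1.integrable_coeFn v).bdd_mul (hcx x) (c := M') (Filter.Eventually.of_forall fun y => ?_)
      rw [Real.norm_eq_abs, abs_of_nonneg (hc_nonneg x y)]; exact hcM x y
    have hbound : ∀ x, 0 ≤ cDens γ c (v : T → ℝ) x ∧ cDens γ c (v : T → ℝ) x ≤ L := by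
      intro x
      constructor
      · refine integral_nonneg_of_ae ?_
        filter_upwards [hv] with y hy
        exact mul_nonneg (hc_nonneg x y) hy
      · have h1 : cDens γ c (v : T → ℝ) x ≤ ∫ y, M' * ‖(v : T → ℝ) y‖ ∂γ := by
          refine integral_mono_ae (hI x) ((L1.integrable_coeFn v).norm.const_mul M') ?_
          filter_upwards with y
          calc c x y * v y ≤ c x y * ‖(v : T → ℝ) y‖ :=
                mul_le_mul_of_nonneg_left (le_abs_self _) (hc_nonneg x y)
            _ ≤ M' * ‖(v : T → ℝ) y‖ :=
                mul_le_mul_of_nonneg_right (hcM x y) (norm_nonneg _)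
        rw [MeasureTheory.integral_const_mul, ← L1.norm_eq_integral_norm] at h1
        exact h1.trans (mul_le_mul_of_nonneg_left hvK hM'0)
    refine ⟨hbound, ?_⟩
    have hsm : StronglyMeasurable (fun x => cDens γ c (v : T → ℝ) x) := by
      have : StronglyMeasurable (Function.uncurry fun x y => c x y * v y) :=
        hc_meas.stronglyMeasurable.mul ((Lp.stronglyMeasurable v).comp_measurable measurable_snd)
      exact this.integral_prod_right
    have hsm2 : AEStronglyMeasurable (mfField γ c (v : T → ℝ)) γ :=
      (hsm.mul (stronglyMeasurable_const.sub (Lp.stronglyMeasurable v))).aestronglyMeasurable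
    refine Integrable.mono' (((integrable_const (1:ℝ)).add
        (L1.integrable_coeFn v).norm).const_mul L) hsm2 ?_
    filter_upwards with x
    have h0 := (hbound x).1
    have hL' := (hbound x).2
    rw [Real.norm_eq_abs, mfField, abs_mul, abs_of_nonneg h0]
    calc cDens γ c (v : T → ℝ) x * |1 - v x| ≤ L * |1 - v x| :=
          mul_le_mul_of_nonneg_right hL' (abs_nonneg _)
      _ ≤ L * (1 + ‖(v : T → ℝ) x‖) := by
          refine mul_le_mul_of_nonneg_left ?_ hL0
          rw [Real.norm_eq_abs]
          calc |1 - v x| ≤ |(1:ℝ)| + |v x| := abs_sub _ _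
            _ = 1 + |v x| := by rw [abs_one]
      _ = L * ((fun x => 1 + ‖(v : T → ℝ) x‖) x) := rfl
  have hMemF : ∀ r ∈ Set.Icc (0:ℝ) τ, MemLp (mfField γ c ((u r : T → ℝ))) 1 γ :=
    fun r hr => memLp_one_iff_integrable.2 ((hMain (u r) (hu_nonneg r hr) (hKb r hr)).2)
  have hcoeF : ∀ r ∈ Set.Icc (0:ℝ) τ,
      (mfFieldLp γ c (u r) : T → ℝ) =ᵐ[γ] mfField γ c ((u r : T → ℝ)) := by
    intro r hr
    rw [mfFieldLp, dif_pos (hMemF r hr)]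
    exact MemLp.coeFn_toLp _
  -- the penalty functional
  set ψ : ℝ → ℝ := fun a => max (a - C) 0 + max (C⁻¹ - a) 0 with hψdef
  have hψ_cont : Continuous ψ := by
    rw [hψdef]
    exact ((continuous_id.sub continuous_const).max continuous_const).add
      ((continuous_const.sub continuous_id).max continuous_const)
  have hψ_nonneg : ∀ a, 0 ≤ ψ a := fun a => add_nonneg (le_max_right _ _) (le_max_right _ _)
  have hψ_int : ∀ v : Lp ℝ 1 γ, Integrable (fun x => ψ (v x)) γ := by
    intro v
    refine Integrable.mono' ((integrable_const (C + C⁻¹)).add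
        ((L1.integrable_coeFn v).norm.const_mul 2))
      (hψ_cont.comp_aestronglyMeasurable (Lp.aestronglyMeasurable v)) ?_
    filter_upwards with x
    rw [Real.norm_eq_abs, abs_of_nonneg (hψ_nonneg _)]
    have e1 : max ((v : T → ℝ) x - C) 0 ≤ |(v : T → ℝ) x| :=
      max_le (by linarith [le_abs_self ((v : T → ℝ) x)]) (abs_nonneg _)
    have e2 : max (C⁻¹ - (v : T → ℝ) x) 0 ≤ C⁻¹ + |(v : T → ℝ) x| := by
      refine max_le (by linarith [neg_abs_le ((v : T → ℝ) x)]) ?_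
      have : (0:ℝ) ≤ C⁻¹ := by positivity
      linarith [abs_nonneg ((v : T → ℝ) x)]
    have : ψ ((v : T → ℝ) x) ≤ C⁻¹ + 2 * |(v : T → ℝ) x| := by
      rw [hψdef]; dsimp only; linarith
    refine this.trans ?_
    simp only [Pi.add_apply, Real.norm_eq_abs]
    linarith [abs_nonneg ((v : T → ℝ) x)]
  set w : ℝ → ℝ := fun t => ∫ x, ψ ((u t : T → ℝ) x) ∂γ with hwdef
  have hw0 : w 0 = 0 := by
    rw [hwdef]
    dsimp only
    rw [hu0]
    rw [show (0:ℝ) = ∫ (_ : T), (0:ℝ) ∂γ by simp]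
    refine integral_congr_ae ?_
    filter_upwards [hu₀] with x hx
    rw [hψdef]; dsimp only
    rw [max_eq_right (by linarith [hx.2]), max_eq_right ?_, add_zero]
    rw [one_div] at hx
    linarith [hx.1]
  -- uniform continuity of the trajectory
  have hUC := isCompact_Icc.uniformContinuousOn_of_continuous hu_cont
  rw [Metric.uniformContinuousOn_iff] at hUC
  -- main a priori estimate : w t ≤ 0 on [0,τ]
  have key : ∀ t ∈ Set.Icc (0:ℝ) τ, w t ≤ 0 := by
    intro t ht
    have h00 : w t ≤ 0 + (0:ℝ) + 1 → True := fun _ => trivial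
    refine le_of_forall_pos_le_add ?_
    intro ε hε
    have hden : (0:ℝ) < L * τ + 1 := by positivity
    set ε' := ε / (L * τ + 1) with hε'def
    have hε'pos : 0 < ε' := div_pos hε hden
    obtain ⟨δ₀, hδ₀pos, hδ₀⟩ := hUC ε' hε'pos
    set δ := δ₀ / 2 with hδdef
    have hδpos : 0 < δ := by positivity
    -- one-step estimate
    have step : ∀ s t', s ∈ Set.Icc (0:ℝ) τ → t' ∈ Set.Icc (0:ℝ) τ → s ≤ t' → t' - s ≤ δ →
        w t' ≤ w s + L * ε' * (t' - s) := by
      intro s t' hs ht' hst hδs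
      set g : T → ℝ := fun x =>
        if C < (u t' : T → ℝ) x then 1 else if (u t' : T → ℝ) x < C⁻¹ then -1 else 0 with hgdef
      have hgm : Measurable g := by
        have hm := (Lp.stronglyMeasurable (u t')).measurable
        exact Measurable.ite (measurableSet_lt measurable_const hm) measurable_const
          (Measurable.ite (measurableSet_lt hm measurable_const) measurable_const
            measurable_const)
      have hgb : ∀ x, ‖g x‖ ≤ 1 := by
        intro x; rw [hgdef]; dsimp only; split_ifs <;> simp
      set Λ := pairCLM γ g hgm.aestronglyMeasurable hgb with hΛdef
      have hFt' := hu_eq t' ht'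
      have hFs := hu_eq s hs
      have hII : IntervalIntegrable (fun r => mfFieldLp γ c (u r)) MeasureTheory.volume s t' := by
        refine hFt'.1.mono_set ?_
        rw [Set.uIcc_of_le hst, Set.uIcc_of_le ht'.1]
        exact Set.Icc_subset_Icc hs.1 le_rfl
      have hds : u t' - u s = ∫ r in s..t', mfFieldLp γ c (u r) := by
        rw [hFt'.2, hFs.2, ← integral_interval_sub_left hFt'.1 hFs.1]
        abel
      have h1 : w t' - w s ≤ Λ (u t' - u s) := by
        have hit := hψ_int (u t')
        have his := hψ_int (u s)
        rw [hwdef]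
        dsimp only
        rw [← integral_sub hit his, hΛdef, pairCLM_apply]
        refine integral_mono_ae (hit.sub his)
          ((L1.integrable_coeFn _).bdd_mul hgm.aestronglyMeasurable (Filter.Eventually.of_forall hgb)) ?_
        filter_upwards [Lp.coeFn_sub (u t') (u s)] with x hx
        rw [hx, Pi.sub_apply]
        exact psi_step hC.le
      have h2 : Λ (u t' - u s) = ∫ r in s..t', Λ (mfFieldLp γ c (u r)) := by
        rw [hds]
        exact (ContinuousLinearMap.intervalIntegral_comp_comm Λ hII).symm
      have h3 : ∀ r ∈ Set.Icc s t', Λ (mfFieldLp γ c (u r)) ≤ L * ε' := by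
        intro r hr
        have hrIcc : r ∈ Set.Icc (0:ℝ) τ := ⟨hs.1.trans hr.1, hr.2.trans ht'.2⟩
        have hnorm : ‖u t' - u r‖ ≤ ε' := by
          have hdist : dist t' r < δ₀ := by
            rw [Real.dist_eq, abs_of_nonneg (by linarith [hr.2] : (0:ℝ) ≤ t' - r)]
            have := hr.1
            rw [hδdef] at hδs
            linarith
          have := hδ₀ t' ht' r hrIcc hdist
          rw [dist_eq_norm] at this
          exact this.le
        have hbd := (hMain (u r) (hu_nonneg r hrIcc) (hKb r hrIcc)).1
        have hFr := (hMain (u r) (hu_nonneg r hrIcc) (hKb r hrIcc)).2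
        rw [hΛdef, pairCLM_apply]
        calc ∫ x, g x * (mfFieldLp γ c (u r) : T → ℝ) x ∂γ
            = ∫ x, g x * mfField γ c ((u r : T → ℝ)) x ∂γ := by
              refine integral_congr_ae ?_
              filter_upwards [hcoeF r hrIcc] with x hx
              rw [hx]
          _ ≤ ∫ x, L * ‖((u t' - u r : Lp ℝ 1 γ) : T → ℝ) x‖ ∂γ := by
              refine integral_mono_ae
                (hFr.bdd_mul hgm.aestronglyMeasurable (Filter.Eventually.of_forall hgb))
                ((L1.integrable_coeFn _).norm.const_mul L) ?_
              filter_upwards [Lp.coeFn_sub (u t') (u r)] with x hx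
              rw [hx, Pi.sub_apply, Real.norm_eq_abs]
              have hcd := hbd x
              have habs1 : (u t' : T → ℝ) x - (u r : T → ℝ) x ≤
                  |(u t' : T → ℝ) x - (u r : T → ℝ) x| := le_abs_self _
              have habs2 : -((u t' : T → ℝ) x - (u r : T → ℝ) x) ≤
                  |(u t' : T → ℝ) x - (u r : T → ℝ) x| := neg_le_abs _
              have habs0 : (0:ℝ) ≤ |(u t' : T → ℝ) x - (u r : T → ℝ) x| := abs_nonneg _
              rw [hgdef, mfField]; dsimp only
              split_ifs with hA hB
              · have hle : 1 - (u r : T → ℝ) x ≤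
                    (1 - C) + |(u t' : T → ℝ) x - (u r : T → ℝ) x| := by linarith
                nlinarith [mul_le_mul_of_nonneg_left hle hcd.1,
                  mul_le_mul_of_nonneg_right hcd.2 habs0,
                  mul_nonneg hcd.1 (by linarith : (0:ℝ) ≤ C - 1)]
              · have hle : (u r : T → ℝ) x - 1 ≤
                    |(u t' : T → ℝ) x - (u r : T → ℝ) x| := by linarith
                nlinarith [mul_le_mul_of_nonneg_left hle hcd.1,
                  mul_le_mul_of_nonneg_right hcd.2 habs0]
              · rw [zero_mul]
                exact mul_nonneg hL0 habs0
          _ = L * ‖u t' - u r‖ := by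
              rw [MeasureTheory.integral_const_mul, ← L1.norm_eq_integral_norm]
          _ ≤ L * ε' := mul_le_mul_of_nonneg_left hnorm hL0
      have hΛint : IntervalIntegrable (fun r => Λ (mfFieldLp γ c (u r)))
          MeasureTheory.volume s t' := ⟨Λ.integrable_comp hII.1, Λ.integrable_comp hII.2⟩
      have h4 : (∫ r in s..t', Λ (mfFieldLp γ c (u r))) ≤ L * ε' * (t' - s) := by
        calc (∫ r in s..t', Λ (mfFieldLp γ c (u r))) ≤ ∫ _ in s..t', (L * ε') :=
              intervalIntegral.integral_mono_on hst hΛint intervalIntegrable_const h3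
          _ = (t' - s) * (L * ε') := by rw [intervalIntegral.integral_const, smul_eq_mul]
          _ = L * ε' * (t' - s) := by ring
      rw [h2] at h1
      linarith
    -- iterate the one-step estimate
    have ind : ∀ k : ℕ, ∀ t' ∈ Set.Icc (0:ℝ) τ, t' ≤ k * δ → w t' ≤ L * ε' * t' := by
      intro k
      induction k with
      | zero =>
        intro t' ht' hle
        have ht'0 : t' = 0 := le_antisymm (by simpa using hle) ht'.1
        rw [ht'0, hw0, mul_zero]
      | succ k ih =>
        intro t' ht' hle
        set s := max (t' - δ) 0 with hsdef
        have hs0 : (0:ℝ) ≤ s := le_max_right _ _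
        have hst : s ≤ t' := max_le (by linarith) ht'.1
        have hsτ : s ≤ τ := hst.trans ht'.2
        have hsk : s ≤ k * δ := by
          refine max_le ?_ (by positivity)
          push_cast at hle
          linarith
        have hts : t' - s ≤ δ := by
          have := le_max_left (t' - δ) 0
          linarith
        have h1 := step s t' ⟨hs0, hsτ⟩ ht' hst hts
        have h2 := ih s ⟨hs0, hsτ⟩ hsk
        have h3 : L * ε' * s + L * ε' * (t' - s) = L * ε' * t' := by ring
        linarith
    obtain ⟨k, hk⟩ := exists_nat_ge (τ / δ)
    have hτk : τ ≤ k * δ := by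
      rw [div_le_iff₀ hδpos] at hk
      linarith
    have hwt := ind k t ht (ht.2.trans hτk)
    have hfin : L * ε' * t ≤ ε := by
      have hq : ε' * (L * τ + 1) = ε := div_mul_cancel₀ _ hden.ne'
      nlinarith [mul_le_mul_of_nonneg_left ht.2 (mul_nonneg hL0 hε'pos.le),
        mul_nonneg hL0 hε'pos.le, hε'pos.le]
    linarith
  -- conclusion
  intro t ht
  have hw_nonneg : 0 ≤ w t := integral_nonneg fun x => hψ_nonneg _
  have hwt : w t = 0 := le_antisymm (key t ht) hw_nonneg
  have hae := (integral_eq_zero_iff_of_nonneg (fun x => hψ_nonneg _) (hψ_int (u t))).1 hwt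
  filter_upwards [hae] with x hx
  have hx' : ψ ((u t : T → ℝ) x) = 0 := hx
  rw [hψdef] at hx'
  dsimp only at hx'
  have e1 : (u t : T → ℝ) x - C ≤ max ((u t : T → ℝ) x - C) 0 := le_max_left _ _
  have e2 : C⁻¹ - (u t : T → ℝ) x ≤ max (C⁻¹ - (u t : T → ℝ) x) 0 := le_max_left _ _
  have e3 : (0:ℝ) ≤ max ((u t : T → ℝ) x - C) 0 := le_max_right _ _
  have e4 : (0:ℝ) ≤ max (C⁻¹ - (u t : T → ℝ) x) 0 := le_max_right _ _
  constructor
  · rw [one_div]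
    linarith
  · linarith
end

section
/- For every n > 0 and every bounded measurable function ω : (Measure T) × T → [0,∞), the following two series of nonnegative terms are finite and equal: Σ_{N=1}^∞ (n^N/N!) ∫_{T^N} ( ∫_T ω(L_N(𝐱), z) · (Σ_{j=1}^N c(z, x_j)) γ(dz) ) γ^{⊗N}(d𝐱) = Σ_{N=1}^∞ (n^N/N!) ∫_{T^N} ( (1/n) · Σ_{i=1}^N Σ_{j=1}^N ω( (1/n)·Σ_{k≠i} δ_{x_k}, x_i ) · c(x_i, x_j) ) γ^{⊗N}(d𝐱). -/
open MeasureTheory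
open scoped ENNReal Classical

/-- The rescaled empirical measure `L_N(𝐱) = (1/n)·Σ_{k} δ_{x_k}`. -/
noncomputable def empMeas {T : Type*} [MeasurableSpace T] (n : ℝ) {m : ℕ} (x : Fin m → T) :
    Measure T :=
  ENNReal.ofReal (1 / n) • ∑ k : Fin m, Measure.dirac (x k)

/-- The rescaled empirical measure with the `i`-th particle removed:
`(1/n)·Σ_{k ≠ i} δ_{x_k}`. -/
noncomputable def empMeasErase {T : Type*} [MeasurableSpace T] (n : ℝ) {m : ℕ} (x : Fin m → T)
    (i : Fin m) : Measure T :=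
  ENNReal.ofReal (1 / n) • ∑ k ∈ Finset.univ.erase i, Measure.dirac (x k)

lemma sum_erase_succAbove {M : Type*} [AddCommMonoid M] {m : ℕ} (i : Fin (m + 1))
    (f : Fin (m + 1) → M) :
    ∑ k ∈ Finset.univ.erase i, f k = ∑ j : Fin m, f (i.succAbove j) := by
  refine (Finset.sum_bij (fun j _ => i.succAbove j) ?_ ?_ ?_ ?_).symm
  · intro j _; exact Finset.mem_erase.2 ⟨Fin.succAbove_ne i j, Finset.mem_univ _⟩
  · intro a _ b _ h; exact Fin.succAbove_right_injective h
  · intro k hk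
    rcases Fin.exists_succAbove_eq (Finset.ne_of_mem_erase hk) with ⟨j, hj⟩
    exact ⟨j, Finset.mem_univ j, hj⟩
  · intro j _; rfl

lemma empMeasErase_eq {T : Type*} [MeasurableSpace T] (n : ℝ) {m : ℕ} (x : Fin (m + 1) → T)
    (i : Fin (m + 1)) :
    empMeasErase n x i = empMeas n (fun j : Fin m => x (i.succAbove j)) := by
  unfold empMeasErase empMeas
  rw [sum_erase_succAbove i (fun k => Measure.dirac (x k))]

lemma measurable_empMeas {T : Type*} [MeasurableSpace T] (n : ℝ) (m : ℕ) :
    Measurable fun x : Fin m → T => empMeas n x := by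
  rw [Measure.measurable_measure]
  intro s hs
  simp only [empMeas, Measure.smul_apply, Measure.coe_finset_sum, Finset.sum_apply,
    smul_eq_mul]
  exact (Finset.measurable_sum _ fun k _ =>
    (Measure.measurable_coe hs).comp
      (Measure.measurable_dirac.comp (measurable_pi_apply k))).const_mul _

/-- The key "detailed balance" identity for a fixed number `N+2` of particles. -/
lemma key_identity {T : Type*} [MeasurableSpace T]
    (γ : Measure T) [IsFiniteMeasure γ]
    (c : T → T → ℝ) (hc_meas : Measurable fun p : T × T => c p.1 p.2)
    (hc_nonneg : ∀ x y, 0 ≤ c x y) (hc_diag : ∀ x, c x x = 0)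
    (n : ℝ) (hn : 0 < n)
    (ω : Measure T → T → ℝ)
    (hω_meas : Measurable fun p : Measure T × T => ω p.1 p.2)
    (hω_nonneg : ∀ μ x, 0 ≤ ω μ x) (N : ℕ) :
    ∫⁻ x : Fin (N + 2) → T,
        ENNReal.ofReal ((1 / n) * ∑ i : Fin (N + 2), ∑ j : Fin (N + 2),
          ω (empMeasErase n x i) (x i) * c (x i) (x j))
        ∂(Measure.pi fun _ : Fin (N + 2) => γ)
      = (ENNReal.ofReal (1 / n) * ((N : ℝ≥0∞) + 2)) *
        ∫⁻ x : Fin (N + 1) → T,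
          ∫⁻ z, ENNReal.ofReal (ω (empMeas n x) z * ∑ j : Fin (N + 1), c z (x j)) ∂γ
          ∂(Measure.pi fun _ : Fin (N + 1) => γ) := by
  have h1n : (0 : ℝ) ≤ 1 / n := by positivity
  set g : T × (Fin (N + 1) → T) → ℝ≥0∞ := fun p =>
    ENNReal.ofReal (ω (empMeas n p.2) p.1 * ∑ j : Fin (N + 1), c p.1 (p.2 j)) with hg_def
  have hg : Measurable g := by
    apply ENNReal.measurable_ofReal.comp
    apply Measurable.mul
    · exact Measurable.comp (g := fun p : Measure T × T => ω p.1 p.2)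
        (f := fun p : T × (Fin (N + 1) → T) => (empMeas n p.2, p.1)) hω_meas
        (((measurable_empMeas n (N + 1)).comp measurable_snd).prodMk measurable_fst)
    · exact Finset.measurable_sum _ fun j _ =>
        Measurable.comp (g := fun p : T × T => c p.1 p.2)
          (f := fun p : T × (Fin (N + 1) → T) => (p.1, p.2 j)) hc_meas
          (measurable_fst.prodMk ((measurable_pi_apply j).comp measurable_snd))
  -- measurability of each summand
  have hfi : ∀ i : Fin (N + 2), Measurable fun x : Fin (N + 2) → T =>
      ENNReal.ofReal (∑ j : Fin (N + 2), ω (empMeasErase n x i) (x i) * c (x i) (x j)) := by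
    intro i
    have hmerase : Measurable fun x : Fin (N + 2) → T => empMeasErase n x i := by
      have : (fun x : Fin (N + 2) → T => empMeasErase n x i)
          = fun x => empMeas n (fun j : Fin (N + 1) => x (i.succAbove j)) := by
        funext x; exact empMeasErase_eq n x i
      rw [this]
      exact (measurable_empMeas n (N + 1)).comp
        (measurable_pi_lambda _ fun j => measurable_pi_apply _)
    have hcm : ∀ j : Fin (N + 2), Measurable fun x : Fin (N + 2) → T => c (x i) (x j) :=
      fun j => Measurable.comp (g := fun p : T × T => c p.1 p.2)
        (f := fun x : Fin (N + 2) → T => (x i, x j)) hc_meas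
        ((measurable_pi_apply i).prodMk (measurable_pi_apply j))
    have hωm : Measurable fun x : Fin (N + 2) → T => ω (empMeasErase n x i) (x i) :=
      Measurable.comp (g := fun p : Measure T × T => ω p.1 p.2)
        (f := fun x : Fin (N + 2) → T => (empMeasErase n x i, x i)) hω_meas
        (hmerase.prodMk (measurable_pi_apply i))
    exact ENNReal.measurable_ofReal.comp
      (Finset.measurable_sum _ fun j _ => hωm.mul (hcm j))
  -- the common value of the integral for each i
  have hi : ∀ i : Fin (N + 2),
      (∫⁻ x : Fin (N + 2) → T,
        ENNReal.ofReal (∑ j : Fin (N + 2), ω (empMeasErase n x i) (x i) * c (x i) (x j))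
        ∂(Measure.pi fun _ : Fin (N + 2) => γ))
      = ∫⁻ p : T × (Fin (N + 1) → T), g p
          ∂(γ.prod (Measure.pi fun _ : Fin (N + 1) => γ)) := by
    intro i
    have hmp := measurePreserving_piFinSuccAbove (fun _ : Fin (N + 2) => γ) i
    have he := (MeasurableEquiv.piFinSuccAbove (fun _ : Fin (N + 2) => T) i).measurableEmbedding
    have hcomp := hmp.lintegral_comp_emb he g
    rw [← hcomp]
    apply lintegral_congr
    intro x
    have hx : g ((MeasurableEquiv.piFinSuccAbove (fun _ : Fin (N + 2) => T) i) x)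
        = ENNReal.ofReal (ω (empMeas n (fun j : Fin (N + 1) => x (i.succAbove j))) (x i) *
            ∑ j : Fin (N + 1), c (x i) (x (i.succAbove j))) := rfl
    rw [hx, empMeasErase_eq n x i, ← Finset.mul_sum]
    congr 2
    rw [Fin.sum_univ_succAbove (fun j => c (x i) (x j)) i, hc_diag, zero_add]
  calc
    ∫⁻ x : Fin (N + 2) → T,
        ENNReal.ofReal ((1 / n) * ∑ i : Fin (N + 2), ∑ j : Fin (N + 2),
          ω (empMeasErase n x i) (x i) * c (x i) (x j))
        ∂(Measure.pi fun _ : Fin (N + 2) => γ)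
      = ∫⁻ x : Fin (N + 2) → T,
          ENNReal.ofReal (1 / n) * ∑ i : Fin (N + 2),
            ENNReal.ofReal (∑ j : Fin (N + 2), ω (empMeasErase n x i) (x i) * c (x i) (x j))
          ∂(Measure.pi fun _ : Fin (N + 2) => γ) := by
        apply lintegral_congr
        intro x
        rw [ENNReal.ofReal_mul h1n, ENNReal.ofReal_sum_of_nonneg]
        intro i _
        exact Finset.sum_nonneg fun j _ => mul_nonneg (hω_nonneg _ _) (hc_nonneg _ _)
    _ = ENNReal.ofReal (1 / n) * ∑ i : Fin (N + 2),
          ∫⁻ x : Fin (N + 2) → T,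
            ENNReal.ofReal (∑ j : Fin (N + 2), ω (empMeasErase n x i) (x i) * c (x i) (x j))
          ∂(Measure.pi fun _ : Fin (N + 2) => γ) := by
        rw [lintegral_const_mul _ (Finset.measurable_sum _ fun i _ => hfi i),
          lintegral_finset_sum _ fun i _ => hfi i]
    _ = ENNReal.ofReal (1 / n) * (((N : ℝ≥0∞) + 2) *
          ∫⁻ p : T × (Fin (N + 1) → T), g p
            ∂(γ.prod (Measure.pi fun _ : Fin (N + 1) => γ))) := by
        rw [Finset.sum_congr rfl fun i _ => hi i, Finset.sum_const, Finset.card_univ,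
          Fintype.card_fin, nsmul_eq_mul]
        congr 2
        push_cast
        ring
    _ = (ENNReal.ofReal (1 / n) * ((N : ℝ≥0∞) + 2)) *
          ∫⁻ x : Fin (N + 1) → T,
            ∫⁻ z, ENNReal.ofReal (ω (empMeas n x) z * ∑ j : Fin (N + 1), c z (x j)) ∂γ
            ∂(Measure.pi fun _ : Fin (N + 1) => γ) := by
        rw [mul_assoc]
        congr 1
        congr 1
        rw [lintegral_prod g hg.aemeasurable]
        exact lintegral_lintegral_swap (f := fun z y => g (z, y)) hg.aemeasurable

/-- Lemma 3.2 (detailed balance, Poissonized form): the two series of nonnegative terms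
indexed by the number of particles `N ≥ 1` are finite and equal. -/
theorem detailed_balance_series {T : Type*} [TopologicalSpace T] [CompactSpace T] [PolishSpace T]
    [MeasurableSpace T] [BorelSpace T]
    (γ : Measure T) [IsFiniteMeasure γ]
    (c : T → T → ℝ) (hc_meas : Measurable fun p : T × T => c p.1 p.2)
    (hc_nonneg : ∀ x y, 0 ≤ c x y)
    (hc_bdd : BddAbove (Set.range fun p : T × T => c p.1 p.2))
    (hc_diag : ∀ x, c x x = 0)
    (n : ℝ) (hn : 0 < n)
    (ω : Measure T → T → ℝ)
    (hω_meas : Measurable fun p : Measure T × T => ω p.1 p.2)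
    (hω_nonneg : ∀ μ x, 0 ≤ ω μ x)
    (hω_bdd : ∃ B : ℝ, ∀ μ x, ω μ x ≤ B) :
    (∑' N : ℕ, ENNReal.ofReal (n ^ (N + 1) / (Nat.factorial (N + 1) : ℝ)) *
        ∫⁻ x : Fin (N + 1) → T,
          ∫⁻ z, ENNReal.ofReal (ω (empMeas n x) z * ∑ j : Fin (N + 1), c z (x j)) ∂γ
          ∂(Measure.pi fun _ : Fin (N + 1) => γ)) ≠ ⊤ ∧
    (∑' N : ℕ, ENNReal.ofReal (n ^ (N + 1) / (Nat.factorial (N + 1) : ℝ)) *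
        ∫⁻ x : Fin (N + 1) → T,
          ∫⁻ z, ENNReal.ofReal (ω (empMeas n x) z * ∑ j : Fin (N + 1), c z (x j)) ∂γ
          ∂(Measure.pi fun _ : Fin (N + 1) => γ)) =
      ∑' N : ℕ, ENNReal.ofReal (n ^ (N + 1) / (Nat.factorial (N + 1) : ℝ)) *
        ∫⁻ x : Fin (N + 1) → T,
          ENNReal.ofReal ((1 / n) * ∑ i : Fin (N + 1), ∑ j : Fin (N + 1),
            ω (empMeasErase n x i) (x i) * c (x i) (x j))
          ∂(Measure.pi fun _ : Fin (N + 1) => γ) := by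
  obtain ⟨B, hB⟩ := hω_bdd
  obtain ⟨C, hC⟩ := hc_bdd
  rw [mem_upperBounds] at hC
  set B' := max B 0 with hB'def
  set C' := max C 0 with hC'def
  have hB' : ∀ μ x, ω μ x ≤ B' := fun μ x => le_trans (hB μ x) (le_max_left _ _)
  have hC' : ∀ x y, c x y ≤ C' := by
    intro x y
    exact le_trans (hC _ ⟨(x, y), rfl⟩) (le_max_left _ _)
  have hB'0 : (0 : ℝ) ≤ B' := le_max_right _ _
  have hC'0 : (0 : ℝ) ≤ C' := le_max_right _ _
  set G := (γ Set.univ).toReal with hGdef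
  have hG0 : (0 : ℝ) ≤ G := ENNReal.toReal_nonneg
  have hGuniv : γ Set.univ = ENNReal.ofReal G := (ENNReal.ofReal_toReal (measure_ne_top γ _)).symm
  -- the LHS series terms
  set f : ℕ → ℝ≥0∞ := fun N =>
    ENNReal.ofReal (n ^ (N + 1) / (Nat.factorial (N + 1) : ℝ)) *
      ∫⁻ x : Fin (N + 1) → T,
        ∫⁻ z, ENNReal.ofReal (ω (empMeas n x) z * ∑ j : Fin (N + 1), c z (x j)) ∂γ
        ∂(Measure.pi fun _ : Fin (N + 1) => γ) with hf_def
  -- termwise bound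
  have hbound : ∀ N : ℕ, f N ≤
      ENNReal.ofReal ((n ^ (N + 1) / (Nat.factorial (N + 1) : ℝ)) *
        (B' * ((N + 1 : ℝ) * C') * G ^ (N + 2))) := by
    intro N
    have hcoef : (0 : ℝ) ≤ n ^ (N + 1) / (Nat.factorial (N + 1) : ℝ) := by positivity
    have hinner : ∀ x : Fin (N + 1) → T,
        (∫⁻ z, ENNReal.ofReal (ω (empMeas n x) z * ∑ j : Fin (N + 1), c z (x j)) ∂γ)
          ≤ ENNReal.ofReal (B' * ((N + 1 : ℝ) * C')) * γ Set.univ := by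
      intro x
      calc (∫⁻ z, ENNReal.ofReal (ω (empMeas n x) z * ∑ j : Fin (N + 1), c z (x j)) ∂γ)
          ≤ ∫⁻ _, ENNReal.ofReal (B' * ((N + 1 : ℝ) * C')) ∂γ := by
            apply lintegral_mono
            intro z
            apply ENNReal.ofReal_le_ofReal
            apply mul_le_mul (hB' _ _) ?_ ?_ hB'0
            · calc (∑ j : Fin (N + 1), c z (x j)) ≤ ∑ _j : Fin (N + 1), C' :=
                  Finset.sum_le_sum fun j _ => hC' _ _
                _ = (N + 1 : ℝ) * C' := by
                  rw [Finset.sum_const, Finset.card_univ, Fintype.card_fin, nsmul_eq_mul]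
                  push_cast; ring
            · exact Finset.sum_nonneg fun j _ => hc_nonneg _ _
        _ = ENNReal.ofReal (B' * ((N + 1 : ℝ) * C')) * γ Set.univ := lintegral_const _
    calc f N ≤ ENNReal.ofReal (n ^ (N + 1) / (Nat.factorial (N + 1) : ℝ)) *
          ∫⁻ _ : Fin (N + 1) → T, ENNReal.ofReal (B' * ((N + 1 : ℝ) * C')) * γ Set.univ
            ∂(Measure.pi fun _ : Fin (N + 1) => γ) :=
          mul_le_mul_right (lintegral_mono hinner) _
      _ = ENNReal.ofReal (n ^ (N + 1) / (Nat.factorial (N + 1) : ℝ)) *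
            (ENNReal.ofReal (B' * ((N + 1 : ℝ) * C')) * γ Set.univ *
              (γ Set.univ) ^ (N + 1)) := by
          rw [lintegral_const, Measure.pi_univ, Finset.prod_const, Finset.card_univ,
            Fintype.card_fin]
      _ = ENNReal.ofReal ((n ^ (N + 1) / (Nat.factorial (N + 1) : ℝ)) *
            (B' * ((N + 1 : ℝ) * C') * G ^ (N + 2))) := by
          rw [hGuniv, ← ENNReal.ofReal_pow hG0]
          rw [← ENNReal.ofReal_mul (by positivity), ← ENNReal.ofReal_mul (by positivity),
            ← ENNReal.ofReal_mul hcoef]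
          congr 1
          ring
  -- summability of the bounding series
  have hsummable : Summable fun N : ℕ =>
      (n ^ (N + 1) / (Nat.factorial (N + 1) : ℝ)) *
        (B' * ((N + 1 : ℝ) * C') * G ^ (N + 2)) := by
    have hrw : (fun N : ℕ => (n ^ (N + 1) / (Nat.factorial (N + 1) : ℝ)) *
        (B' * ((N + 1 : ℝ) * C') * G ^ (N + 2)))
        = fun N : ℕ => (B' * C' * G ^ 2 * n) * ((n * G) ^ N / (Nat.factorial N : ℝ)) := by
      funext N
      have hfac : ((Nat.factorial (N + 1) : ℝ)) = (N + 1 : ℝ) * (Nat.factorial N : ℝ) := by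
        rw [Nat.factorial_succ]; push_cast; ring
      have hfacN : (Nat.factorial N : ℝ) ≠ 0 := Nat.cast_ne_zero.2 (Nat.factorial_ne_zero N)
      have hN1 : (N + 1 : ℝ) ≠ 0 := by positivity
      simp only [hfac]
      field_simp
      ring
    rw [hrw]
    exact (Real.summable_pow_div_factorial (n * G)).mul_left _
  have hfin : (∑' N : ℕ, f N) ≠ ⊤ := by
    have h1 : (∑' N : ℕ, f N) ≤ ∑' N : ℕ,
        ENNReal.ofReal ((n ^ (N + 1) / (Nat.factorial (N + 1) : ℝ)) *
          (B' * ((N + 1 : ℝ) * C') * G ^ (N + 2))) := ENNReal.tsum_le_tsum hbound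
    have h2 : (∑' N : ℕ,
        ENNReal.ofReal ((n ^ (N + 1) / (Nat.factorial (N + 1) : ℝ)) *
          (B' * ((N + 1 : ℝ) * C') * G ^ (N + 2)))) ≠ ⊤ := by
      rw [← ENNReal.ofReal_tsum_of_nonneg (fun N => by positivity) hsummable]
      exact ENNReal.ofReal_ne_top
    exact fun h => h2 (top_le_iff.1 (h ▸ h1))
  refine ⟨hfin, ?_⟩
  -- the RHS series terms
  set g : ℕ → ℝ≥0∞ := fun N =>
    ENNReal.ofReal (n ^ (N + 1) / (Nat.factorial (N + 1) : ℝ)) *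
      ∫⁻ x : Fin (N + 1) → T,
        ENNReal.ofReal ((1 / n) * ∑ i : Fin (N + 1), ∑ j : Fin (N + 1),
          ω (empMeasErase n x i) (x i) * c (x i) (x j))
        ∂(Measure.pi fun _ : Fin (N + 1) => γ) with hg_def
  have hg0 : g 0 = 0 := by
    have : ∀ x : Fin 1 → T,
        ENNReal.ofReal ((1 / n) * ∑ i : Fin 1, ∑ j : Fin 1,
          ω (empMeasErase n x i) (x i) * c (x i) (x j)) = 0 := by
      intro x
      simp [hc_diag]
    simp only [hg_def]
    rw [lintegral_congr this, lintegral_zero, mul_zero]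
  have hshift : ∀ N : ℕ, g (N + 1) = f N := by
    intro N
    have hkey := key_identity γ c hc_meas hc_nonneg hc_diag n hn ω hω_meas hω_nonneg N
    simp only [hg_def, hf_def]
    rw [show (N + 1 + 1) = N + 2 from rfl, hkey, ← mul_assoc]
    congr 1
    have hnat : ((N : ℝ≥0∞) + 2) = ENNReal.ofReal ((N : ℝ) + 2) := by
      rw [ENNReal.ofReal_add (by positivity) (by norm_num)]
      simp [ENNReal.ofReal_natCast]
    rw [hnat, ← ENNReal.ofReal_mul (by positivity), ← ENNReal.ofReal_mul (by positivity)]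
    congr 1
    have hfac : ((Nat.factorial (N + 2) : ℝ)) = ((N : ℝ) + 2) * (Nat.factorial (N + 1) : ℝ) := by
      rw [show N + 2 = (N + 1) + 1 from rfl, Nat.factorial_succ]; push_cast; ring
    have hfacN : (Nat.factorial (N + 1) : ℝ) ≠ 0 := Nat.cast_ne_zero.2 (Nat.factorial_ne_zero _)
    have hN2 : ((N : ℝ) + 2) ≠ 0 := by positivity
    simp only [hfac]
    field_simp
    ring
  have : (∑' N : ℕ, g N) = ∑' N : ℕ, f N := by
    rw [tsum_eq_zero_add' ENNReal.summable, hg0, zero_add]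
    exact tsum_congr hshift
  exact this.symm
end
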